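/- Let M be a subset of feature variables satisfying the Markov blanket property for C (C is conditionally independent of F \ M given M). Then for every subset S ⊆ F of the features, I(C; M) ≥ I(C; S); that is, M maximizes mutual information with C among all feature subsets. -/

import Mathlib

open Finset

namespace PaperFS

variable {Ω : Type} [Fintype Ω]

/-- The (marginal) probability mass of `X = x` under the weight function `p`. -/
noncomputable def pmfOf {α : Type} [DecidableEq α] (p : Ω → ℝ) (X : Ω → α) (x : α) : ℝ :=
  ∑ ω ∈ Finset.univ.filter (fun ω => X ω = x), p ω

/-- `p` is a probability mass function on the finite sample space `Ω`. -/
def IsPMF (p : Ω → ℝ) : Prop := (∀ ω, 0 ≤ p ω) ∧ ∑ ω, p ω = 1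

/-- Mutual information `I(X;Y)` of discrete random variables. -/
noncomputable def MI {α β : Type} [Fintype α] [Fintype β] [DecidableEq α] [DecidableEq β]
    (p : Ω → ℝ) (X : Ω → α) (Y : Ω → β) : ℝ :=
  ∑ x : α, ∑ y : β,
    pmfOf p (fun ω => (X ω, Y ω)) (x, y) *
      Real.log (pmfOf p (fun ω => (X ω, Y ω)) (x, y) / (pmfOf p X x * pmfOf p Y y))

/-- Conditional mutual information `I(X;Y|Z)` of discrete random variables. -/
noncomputable def CMI {α β γ : Type} [Fintype α] [Fintype β] [Fintype γ]
    [DecidableEq α] [DecidableEq β] [DecidableEq γ]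
    (p : Ω → ℝ) (X : Ω → α) (Y : Ω → β) (Z : Ω → γ) : ℝ :=
  ∑ z : γ, ∑ x : α, ∑ y : β,
    pmfOf p (fun ω => (X ω, Y ω, Z ω)) (x, y, z) *
      Real.log ((pmfOf p Z z * pmfOf p (fun ω => (X ω, Y ω, Z ω)) (x, y, z)) /
        (pmfOf p (fun ω => (X ω, Z ω)) (x, z) * pmfOf p (fun ω => (Y ω, Z ω)) (y, z)))

/-- Shannon entropy `H(X)`. -/
noncomputable def Ent {α : Type} [Fintype α] [DecidableEq α] (p : Ω → ℝ) (X : Ω → α) : ℝ :=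
  -∑ x : α, pmfOf p X x * Real.log (pmfOf p X x)

/-- Conditional entropy `H(X|Y) = H(X) - I(X;Y)`. -/
noncomputable def CEnt {α β : Type} [Fintype α] [Fintype β] [DecidableEq α] [DecidableEq β]
    (p : Ω → ℝ) (X : Ω → α) (Y : Ω → β) : ℝ :=
  Ent p X - MI p X Y

/-- `X` and `Y` are (marginally) independent: `P(x,y) = P(x)P(y)`. -/
def Indep {α β : Type} [DecidableEq α] [DecidableEq β]
    (p : Ω → ℝ) (X : Ω → α) (Y : Ω → β) : Prop :=
  ∀ x y, pmfOf p (fun ω => (X ω, Y ω)) (x, y) = pmfOf p X x * pmfOf p Y y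

/-- `X` and `Y` are conditionally independent given `Z`:
for every `z` with `P(z) > 0`, `P(x,y|z) = P(x|z)P(y|z)`, written multiplicatively. -/
def CondIndep {α β γ : Type} [DecidableEq α] [DecidableEq β] [DecidableEq γ]
    (p : Ω → ℝ) (X : Ω → α) (Y : Ω → β) (Z : Ω → γ) : Prop :=
  ∀ x y z, 0 < pmfOf p Z z →
    pmfOf p Z z * pmfOf p (fun ω => (X ω, Y ω, Z ω)) (x, y, z) =
      pmfOf p (fun ω => (X ω, Z ω)) (x, z) * pmfOf p (fun ω => (Y ω, Z ω)) (y, z)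

/-- The joint random variable formed by the features indexed by the finite set `S`. -/
def restrict {ι α : Type} (F : ι → Ω → α) (S : Finset ι) (ω : Ω) : {i // i ∈ S} → α :=
  fun i => F i.1 ω

end PaperFS

namespace PaperFS

variable {Ω : Type} [Fintype Ω]

theorem pmfOf_nonneg {α : Type} [DecidableEq α] {p : Ω → ℝ} (hp : ∀ ω, 0 ≤ p ω)
    (X : Ω → α) (x : α) : 0 ≤ pmfOf p X x :=
  Finset.sum_nonneg (fun ω _ => hp ω)

theorem pmfOf_mono {α β : Type} [DecidableEq α] [DecidableEq β] {p : Ω → ℝ}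
    (hp : ∀ ω, 0 ≤ p ω) {X : Ω → α} {Y : Ω → β} {x : α} {y : β}
    (h : ∀ ω, X ω = x → Y ω = y) : pmfOf p X x ≤ pmfOf p Y y := by
  refine Finset.sum_le_sum_of_subset_of_nonneg (fun ω hω => ?_) (fun ω _ _ => hp ω)
  simp only [Finset.mem_filter, Finset.mem_univ, true_and] at hω ⊢
  exact h ω hω

theorem pmfOf_comp {α β : Type} [Fintype α] [DecidableEq α] [DecidableEq β] (p : Ω → ℝ)
    (Y : Ω → α) (f : α → β) (y' : β) :
    pmfOf p (fun ω => f (Y ω)) y' = ∑ y : α, if f y = y' then pmfOf p Y y else 0 := by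
  simp only [pmfOf, Finset.sum_filter]
  have h1 : (∑ y : α, if f y = y' then ∑ a : Ω, if Y a = y then p a else 0 else 0)
      = ∑ y : α, ∑ a : Ω, if Y a = y ∧ f y = y' then p a else 0 := by
    refine Finset.sum_congr rfl fun y _ => ?_
    by_cases h : f y = y' <;> simp [h]
  rw [h1, Finset.sum_comm]
  refine Finset.sum_congr rfl fun ω _ => ?_
  simp [ite_and, Finset.sum_ite_eq]

theorem pmfOf_pair_comp {β β' γ : Type} [Fintype β] [Fintype γ] [DecidableEq β]
    [DecidableEq β'] [DecidableEq γ] (p : Ω → ℝ) (C : Ω → γ) (Y : Ω → β) (f : β → β')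
    (c : γ) (y' : β') :
    pmfOf p (fun ω => (C ω, f (Y ω))) (c, y') =
      ∑ y : β, if f y = y' then pmfOf p (fun ω => (C ω, Y ω)) (c, y) else 0 := by
  have h := pmfOf_comp p (fun ω => (C ω, Y ω)) (fun cy => (cy.1, f cy.2)) (c, y')
  simp only at h
  rw [h, Fintype.sum_prod_type]
  simp [Prod.ext_iff, ite_and, Finset.sum_ite_eq]

theorem pmfOf_snd_marg {β β₂ γ : Type} [Fintype β] [Fintype β₂] [Fintype γ] [DecidableEq β]
    [DecidableEq β₂] [DecidableEq γ] (p : Ω → ℝ) (C : Ω → γ) (Y : Ω → β) (Z : Ω → β₂)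
    (c : γ) (z : β₂) :
    ∑ y : β, pmfOf p (fun ω => (C ω, Y ω, Z ω)) (c, y, z) =
      pmfOf p (fun ω => (C ω, Z ω)) (c, z) := by
  have h := pmfOf_comp p (fun ω => (C ω, Y ω, Z ω)) (fun t => (t.1, t.2.2)) (c, z)
  simp only at h
  rw [h, Fintype.sum_prod_type]
  simp [Prod.ext_iff, ite_and, Finset.sum_ite_eq]
  rw [Fintype.sum_prod_type]
  simp [Finset.sum_ite_eq, Finset.sum_ite_eq']

theorem logsum_aux {ι : Type*} (s : Finset ι) (a b : ι → ℝ) (ha : ∀ i ∈ s, 0 ≤ a i)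
    (hb : ∀ i ∈ s, 0 ≤ b i) (hab : ∀ i ∈ s, b i = 0 → a i = 0) :
    (∑ i ∈ s, a i) * Real.log ((∑ i ∈ s, a i) / (∑ i ∈ s, b i)) ≤
      ∑ i ∈ s, a i * Real.log (a i / b i) := by
  rcases eq_or_lt_of_le (Finset.sum_nonneg ha) with h0 | hApos
  · have hz : ∀ i ∈ s, a i = 0 := (Finset.sum_eq_zero_iff_of_nonneg ha).1 h0.symm
    rw [← h0, zero_mul]
    rw [Finset.sum_congr rfl (fun i hi => by rw [hz i hi, zero_mul])]
    simp
  rcases eq_or_lt_of_le (Finset.sum_nonneg hb) with hb0 | hBpos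
  · exfalso
    have h1 : ∀ i ∈ s, b i = 0 := (Finset.sum_eq_zero_iff_of_nonneg hb).1 hb0.symm
    have : (∑ i ∈ s, a i) = 0 := Finset.sum_eq_zero (fun i hi => hab i hi (h1 i hi))
    linarith
  set A := ∑ i ∈ s, a i with hA
  set B := ∑ i ∈ s, b i with hB
  have hApos' : 0 < A := hApos
  have hBpos' : 0 < B := hBpos
  have key : A * Real.log (A / B) - ∑ i ∈ s, a i * Real.log (a i / b i)
      = ∑ i ∈ s, a i * (Real.log (A / B) - Real.log (a i / b i)) := by
    simp only [mul_sub, Finset.sum_sub_distrib, ← Finset.sum_mul, ← hA]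
  have hle : ∀ i ∈ s, a i * (Real.log (A / B) - Real.log (a i / b i)) ≤ A / B * b i - a i := by
    intro i hi
    rcases eq_or_lt_of_le (ha i hi) with h0 | hpos
    · rw [← h0, zero_mul, sub_zero]
      have := hb i hi; positivity
    have hbpos : 0 < b i := by
      rcases eq_or_lt_of_le (hb i hi) with h | h
      · exfalso; have := hab i hi h.symm; linarith
      · exact h
    have harg : Real.log (A / B) - Real.log (a i / b i) = Real.log (A * b i / (B * a i)) := by
      rw [Real.log_div (by positivity) (by positivity), Real.log_div (by positivity) (by positivity),
        Real.log_div (by positivity) (by positivity),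
        Real.log_mul (by positivity) (by positivity), Real.log_mul (by positivity) (by positivity)]
      ring
    rw [harg]
    have hlog := Real.log_le_sub_one_of_pos (show 0 < A * b i / (B * a i) by positivity)
    calc a i * Real.log (A * b i / (B * a i)) ≤ a i * (A * b i / (B * a i) - 1) :=
          mul_le_mul_of_nonneg_left hlog (le_of_lt hpos)
      _ = A / B * b i - a i := by field_simp
  have hsum : ∑ i ∈ s, a i * (Real.log (A / B) - Real.log (a i / b i)) ≤
      ∑ i ∈ s, (A / B * b i - a i) := Finset.sum_le_sum hle
  have hrhs : ∑ i ∈ s, (A / B * b i - a i) = 0 := by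
    rw [Finset.sum_sub_distrib, ← Finset.mul_sum, ← hA, ← hB]
    field_simp
    ring
  linarith [key, hsum, hrhs]

theorem MI_condIndep {β β₂ γ : Type} [Fintype β] [Fintype β₂] [Fintype γ]
    [DecidableEq β] [DecidableEq β₂] [DecidableEq γ]
    {p : Ω → ℝ} (hp : ∀ ω, 0 ≤ p ω) {C : Ω → γ} {Y : Ω → β} {Z : Ω → β₂}
    (h : CondIndep p C Y Z) : MI p C (fun ω => (Y ω, Z ω)) = MI p C Z := by
  unfold MI
  refine Finset.sum_congr rfl fun c _ => ?_
  rw [Fintype.sum_prod_type, Finset.sum_comm]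
  refine Finset.sum_congr rfl fun z _ => ?_
  rcases eq_or_lt_of_le (pmfOf_nonneg hp Z z) with hz | hz
  · have hcz : pmfOf p (fun ω => (C ω, Z ω)) (c, z) = 0 :=
      le_antisymm (hz ▸ pmfOf_mono hp (fun ω hω => congrArg Prod.snd hω))
        (pmfOf_nonneg hp _ _)
    rw [hcz, zero_mul]
    refine Finset.sum_eq_zero fun y _ => ?_
    have hcyz : pmfOf p (fun ω => (C ω, Y ω, Z ω)) (c, y, z) = 0 :=
      le_antisymm (hz ▸ pmfOf_mono hp (fun ω hω => congrArg (fun t => t.2.2) hω))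
        (pmfOf_nonneg hp _ _)
    rw [show pmfOf p (fun ω => (C ω, Y ω, Z ω)) (c, (y, z)) = 0 from hcyz, zero_mul]
  · have marg := pmfOf_snd_marg p C Y Z c z
    have hterm : ∀ y : β,
        pmfOf p (fun ω => (C ω, Y ω, Z ω)) (c, y, z) *
          Real.log (pmfOf p (fun ω => (C ω, Y ω, Z ω)) (c, y, z) /
            (pmfOf p C c * pmfOf p (fun ω => (Y ω, Z ω)) (y, z))) =
        pmfOf p (fun ω => (C ω, Y ω, Z ω)) (c, y, z) *
          Real.log (pmfOf p (fun ω => (C ω, Z ω)) (c, z) /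
            (pmfOf p C c * pmfOf p Z z)) := by
      intro y
      rcases eq_or_lt_of_le (pmfOf_nonneg hp (fun ω => (C ω, Y ω, Z ω)) (c, y, z)) with h0 | hpos
      · rw [← h0, zero_mul, zero_mul]
      · have hyz : 0 < pmfOf p (fun ω => (Y ω, Z ω)) (y, z) :=
          lt_of_lt_of_le hpos (pmfOf_mono hp (fun ω hω => congrArg Prod.snd hω))
        have hc : 0 < pmfOf p C c :=
          lt_of_lt_of_le hpos (pmfOf_mono hp (fun ω hω => congrArg Prod.fst hω))
        have heq := h c y z hz
        have hcz : 0 < pmfOf p (fun ω => (C ω, Z ω)) (c, z) := by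
          nlinarith [pmfOf_nonneg hp (fun ω => (C ω, Z ω)) (c, z)]
        have harg : pmfOf p (fun ω => (C ω, Y ω, Z ω)) (c, y, z) /
            (pmfOf p C c * pmfOf p (fun ω => (Y ω, Z ω)) (y, z)) =
            pmfOf p (fun ω => (C ω, Z ω)) (c, z) / (pmfOf p C c * pmfOf p Z z) := by
          rw [div_eq_div_iff (by positivity) (by positivity)]
          linear_combination pmfOf p C c * heq
        rw [harg]
    calc ∑ y : β, pmfOf p (fun ω => (C ω, Y ω, Z ω)) (c, y, z) *
          Real.log (pmfOf p (fun ω => (C ω, Y ω, Z ω)) (c, y, z) /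
            (pmfOf p C c * pmfOf p (fun ω => (Y ω, Z ω)) (y, z)))
        = ∑ y : β, pmfOf p (fun ω => (C ω, Y ω, Z ω)) (c, y, z) *
          Real.log (pmfOf p (fun ω => (C ω, Z ω)) (c, z) /
            (pmfOf p C c * pmfOf p Z z)) := Finset.sum_congr rfl fun y _ => hterm y
      _ = pmfOf p (fun ω => (C ω, Z ω)) (c, z) *
          Real.log (pmfOf p (fun ω => (C ω, Z ω)) (c, z) /
            (pmfOf p C c * pmfOf p Z z)) := by rw [← Finset.sum_mul, marg]

theorem MI_comp_le {β β' γ : Type} [Fintype β] [Fintype β'] [Fintype γ]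
    [DecidableEq β] [DecidableEq β'] [DecidableEq γ]
    {p : Ω → ℝ} (hp : ∀ ω, 0 ≤ p ω) (C : Ω → γ) (Y : Ω → β) (f : β → β') :
    MI p C (fun ω => f (Y ω)) ≤ MI p C Y := by
  unfold MI
  refine Finset.sum_le_sum fun c _ => ?_
  rw [show (∑ y : β, pmfOf p (fun ω => (C ω, Y ω)) (c, y) *
        Real.log (pmfOf p (fun ω => (C ω, Y ω)) (c, y) / (pmfOf p C c * pmfOf p Y y)))
      = ∑ y' : β', ∑ y ∈ Finset.univ.filter (fun y => f y = y'),
        pmfOf p (fun ω => (C ω, Y ω)) (c, y) *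
        Real.log (pmfOf p (fun ω => (C ω, Y ω)) (c, y) / (pmfOf p C c * pmfOf p Y y))
      from (Finset.sum_fiberwise _ _ _).symm]
  refine Finset.sum_le_sum fun y' _ => ?_
  have hA : pmfOf p (fun ω => (C ω, f (Y ω))) (c, y')
      = ∑ y ∈ Finset.univ.filter (fun y => f y = y'), pmfOf p (fun ω => (C ω, Y ω)) (c, y) := by
    rw [pmfOf_pair_comp, Finset.sum_filter]
  have hB : pmfOf p C c * pmfOf p (fun ω => f (Y ω)) y'
      = ∑ y ∈ Finset.univ.filter (fun y => f y = y'), pmfOf p C c * pmfOf p Y y := by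
    rw [pmfOf_comp p Y f y', Finset.mul_sum, Finset.sum_filter]
    exact Finset.sum_congr rfl fun y _ => by split <;> simp
  rw [hA, hB]
  refine logsum_aux _ _ _ (fun y _ => pmfOf_nonneg hp _ _)
    (fun y _ => mul_nonneg (pmfOf_nonneg hp _ _) (pmfOf_nonneg hp _ _)) (fun y _ hb0 => ?_)
  rcases mul_eq_zero.1 hb0 with h0 | h0
  · exact le_antisymm (h0 ▸ pmfOf_mono hp (fun ω hω => congrArg Prod.fst hω))
      (pmfOf_nonneg hp _ _)
  · exact le_antisymm (h0 ▸ pmfOf_mono hp (fun ω hω => congrArg Prod.snd hω))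
      (pmfOf_nonneg hp _ _)

end PaperFS


open PaperFS
/-- a Markov blanket `M` maximizes `I(C;·)` over all feature subsets. -/
theorem mb_maximizes_mi
    {Ω ι α γ : Type} [Fintype Ω] [Fintype ι] [DecidableEq ι]
    [Fintype α] [DecidableEq α] [Fintype γ] [DecidableEq γ]
    (p : Ω → ℝ) (hp : IsPMF p) (C : Ω → γ) (F : ι → Ω → α) (M : Finset ι)
    (hMB : ∀ S : Finset ι, S ⊆ Mᶜ → CondIndep p C (restrict F S) (restrict F M)) :
    ∀ S : Finset ι, MI p C (restrict F S) ≤ MI p C (restrict F M) := by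
  intro S
  classical
  have hCI : CondIndep p C (restrict F (S \ M)) (restrict F M) :=
    hMB (S \ M) (fun i hi => Finset.mem_compl.2 (Finset.mem_sdiff.1 hi).2)
  let f : (({i // i ∈ S \ M} → α) × ({i // i ∈ M} → α)) → ({i // i ∈ S} → α) :=
    fun yz i => if h : i.1 ∈ M then yz.2 ⟨i.1, h⟩
      else yz.1 ⟨i.1, Finset.mem_sdiff.2 ⟨i.2, h⟩⟩
  have hfun : restrict F S = fun ω => f (restrict F (S \ M) ω, restrict F M ω) := by
    funext ω i
    by_cases h : i.1 ∈ M <;> simp [PaperFS.restrict, f, h]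
  calc MI p C (restrict F S)
      ≤ MI p C (fun ω => (restrict F (S \ M) ω, restrict F M ω)) := by
        rw [hfun]; exact MI_comp_le hp.1 C _ f
    _ = MI p C (restrict F M) := MI_condIndep hp.1 hCI
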